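/- Let G = (V, E, L) be a colored directed graph. Then G satisfies the unique path property — for every n ≥ 1, every color sequence w : {0,…,n} → Φ, and every node v, there is at most one path x of length n with x(0) = x(n) = v and L(x(i)) = w(i) for all i — if and only if G contains no pair of intersecting cycles with the same coloring (periodic cycles π₁ ≠ π₂ with L(π₁(i)) = L(π₂(i)) for all i and π₁(i₀) = π₂(i₀) for some i₀). In the paper's terminology, a graph is trackable if and only if it has no intersecting cycles with the same coloring. -/

import Mathlib

private lemma per_int {V : Type*} (f : ℤ → V) (p : ℤ)
    (h : ∀ i, f (i + p) = f i) : ∀ (k : ℤ) (i : ℤ), f (i + p * k) = f i := by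
  intro k
  induction k using Int.induction_on with
  | zero => simp
  | succ k ih =>
      intro i
      have e : i + p * ((k : ℤ) + 1) = (i + p * k) + p := by ring
      rw [e, h, ih]
  | pred k ih =>
      intro i
      have e : i + p * (-(k : ℤ)) = (i + p * (-(k : ℤ) - 1)) + p := by ring
      have := h (i + p * (-(k : ℤ) - 1))
      rw [← e] at this
      rw [← this, ih]

private lemma cyc_step {V : Type*} (E : V → V → Prop) (x : ℕ → V) (n : ℕ) (hn : 0 < n)
    (hE : ∀ i < n, E (x i) (x (i + 1))) (hcl : x n = x 0) :
    ∀ j : ℤ, E (x ((j % (n : ℤ)).toNat)) (x (((j + 1) % (n : ℤ)).toNat)) := by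
  intro j
  have hn' : (0 : ℤ) < n := by exact_mod_cast hn
  have hr0 : 0 ≤ j % (n : ℤ) := Int.emod_nonneg _ hn'.ne'
  have hrn : j % (n : ℤ) < n := Int.emod_lt_of_pos _ hn'
  have hstep : (j + 1) % (n : ℤ) = (j % (n : ℤ) + 1) % n := by
    conv_lhs => rw [← Int.emod_add_mul_ediv j (n : ℤ)]
    rw [show j % (n:ℤ) + (n:ℤ) * (j / (n:ℤ)) + 1 = (j % (n:ℤ) + 1) + (n:ℤ) * (j / (n:ℤ)) by ring,
      Int.add_mul_emod_self_left]
  rcases lt_or_eq_of_le (by omega : j % (n : ℤ) + 1 ≤ n) with hlt | heq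
  · have h1 : (j + 1) % (n : ℤ) = j % (n : ℤ) + 1 := by
      rw [hstep, Int.emod_eq_of_lt (by omega) hlt]
    rw [h1]
    have ht : ((j % (n:ℤ)) + 1).toNat = (j % (n:ℤ)).toNat + 1 := by omega
    rw [ht]
    exact hE _ (by omega)
  · have h1 : (j + 1) % (n : ℤ) = 0 := by
      rw [hstep, heq, Int.emod_self]
    rw [h1]
    have ht : (j % (n:ℤ)).toNat + 1 = n := by omega
    have := hE ((j % (n:ℤ)).toNat) (by omega)
    rw [ht, hcl] at this
    simpa using this

theorem trackable_iff_no_intersecting_cycles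
    {V Φ : Type*} (E : V → V → Prop) (L : V → Φ) :
    (∀ (n : ℕ), 1 ≤ n → ∀ (w : ℕ → Φ) (v : V) (x x' : ℕ → V),
      (∀ i < n, E (x i) (x (i + 1))) →
      (∀ i < n, E (x' i) (x' (i + 1))) →
      x 0 = v → x n = v → x' 0 = v → x' n = v →
      (∀ i ≤ n, L (x i) = w i) → (∀ i ≤ n, L (x' i) = w i) →
      ∀ i ≤ n, x i = x' i) ↔
    ¬ ∃ π₁ π₂ : ℤ → V,
        (∀ i, E (π₁ i) (π₁ (i + 1))) ∧ (∃ p : ℤ, 0 < p ∧ ∀ i, π₁ (i + p) = π₁ i) ∧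
        (∀ i, E (π₂ i) (π₂ (i + 1))) ∧ (∃ p : ℤ, 0 < p ∧ ∀ i, π₂ (i + p) = π₂ i) ∧
        (∀ i, L (π₁ i) = L (π₂ i)) ∧ (∃ i₀, π₁ i₀ = π₂ i₀) ∧ π₁ ≠ π₂ := by
  constructor
  · intro h
    rintro ⟨π₁, π₂, he₁, ⟨p₁, hp₁, hper₁⟩, he₂, ⟨p₂, hp₂, hper₂⟩, hcol, ⟨i₀, hi₀⟩, hne⟩
    rw [Function.ne_iff] at hne
    obtain ⟨j, hj⟩ := hne
    set P : ℤ := p₁ * p₂ with hPdef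
    have hP : 0 < P := mul_pos hp₁ hp₂
    have hP₁ : ∀ i, π₁ (i + P) = π₁ i := fun i => per_int π₁ p₁ hper₁ p₂ i
    have hP₂ : ∀ i, π₂ (i + P) = π₂ i := by
      intro i
      have := per_int π₂ p₂ hper₂ p₁ i
      rwa [mul_comm p₂ p₁] at this
    set m : ℤ := (j - i₀) % P with hmdef
    have hm0 : 0 ≤ m := Int.emod_nonneg _ hP.ne'
    have hmP : m < P := Int.emod_lt_of_pos _ hP
    have hkey : i₀ + m = j + P * (-((j - i₀) / P)) := by
      have := Int.emod_add_mul_ediv (j - i₀) P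
      rw [hmdef]; linarith [this]
    have h1 : π₁ (i₀ + m) = π₁ j := by rw [hkey]; exact per_int π₁ P hP₁ _ j
    have h2 : π₂ (i₀ + m) = π₂ j := by rw [hkey]; exact per_int π₂ P hP₂ _ j
    set n : ℕ := P.toNat with hndef
    have hn : (n : ℤ) = P := Int.toNat_of_nonneg hP.le
    have hn1 : 1 ≤ n := by omega
    have key := h n hn1 (fun i => L (π₁ (i₀ + i))) (π₁ i₀)
      (fun i => π₁ (i₀ + i)) (fun i => π₂ (i₀ + i))
      (by intro i _
          have := he₁ (i₀ + i)
          simpa [add_assoc] using this)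
      (by intro i _
          have := he₂ (i₀ + i)
          simpa [add_assoc] using this)
      (by simp)
      (by show π₁ (i₀ + (n : ℤ)) = π₁ i₀; rw [hn]; exact hP₁ i₀)
      (by simpa using hi₀.symm)
      (by show π₂ (i₀ + (n : ℤ)) = π₁ i₀; rw [hn, hP₂ i₀, ← hi₀])
      (by intro i _; rfl)
      (by intro i _; exact (hcol _).symm)
      m.toNat (by omega)
    have hmn : (m.toNat : ℤ) = m := Int.toNat_of_nonneg hm0
    simp only [hmn] at key
    rw [h1, h2] at key
    exact hj key
  · intro h n hn1 w v x x' hex hex' hx0 hxn hx'0 hx'n hw hw'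
    by_contra hc
    push_neg at hc
    obtain ⟨i, hin, hxne⟩ := hc
    have hiln : i < n := by
      rcases lt_or_eq_of_le hin with h' | rfl
      · exact h'
      · exact absurd (hxn.trans hx'n.symm) hxne
    have hn0 : 0 < n := by omega
    have hn' : (0 : ℤ) < n := by exact_mod_cast hn0
    apply h
    refine ⟨fun j => x ((j % (n : ℤ)).toNat), fun j => x' ((j % (n : ℤ)).toNat),
      cyc_step E x n hn0 hex (hxn.trans hx0.symm),
      ⟨(n : ℤ), hn', fun j => by
        have e : (j + (n:ℤ)) % (n:ℤ) = j % (n:ℤ) := by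
          rw [show j + (n:ℤ) = j + (n:ℤ) * 1 by ring, Int.add_mul_emod_self_left]
        simp only [e]⟩,
      cyc_step E x' n hn0 hex' (hx'n.trans hx'0.symm),
      ⟨(n : ℤ), hn', fun j => by
        have e : (j + (n:ℤ)) % (n:ℤ) = j % (n:ℤ) := by
          rw [show j + (n:ℤ) = j + (n:ℤ) * 1 by ring, Int.add_mul_emod_self_left]
        simp only [e]⟩,
      ?_, ⟨0, ?_⟩, ?_⟩
    · intro j
      have hr0 : 0 ≤ j % (n : ℤ) := Int.emod_nonneg _ hn'.ne'
      have hrn : j % (n : ℤ) < n := Int.emod_lt_of_pos _ hn'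
      have hle : (j % (n : ℤ)).toNat ≤ n := by omega
      rw [hw _ hle, hw' _ hle]
    · simp [Int.emod_emod_of_dvd]
      rw [hx0, hx'0]
    · intro heq
      have := congrFun heq (i : ℤ)
      have hmod : ((i : ℤ) % (n : ℤ)) = (i : ℤ) := Int.emod_eq_of_lt (by omega) (by exact_mod_cast hiln)
      rw [hmod, Int.toNat_natCast] at this
      exact hxne this
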